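/- Let n ≥ 1, p ∈ [0,1], and let A, B ⊆ [n] be sets with |A| = |B| = r, |A ∩ B| = s and 2r − s ≤ n. Then for G ~ G(n,p), the probability that both A and B are dominating sets of G is at most ( 1 − 2(1−p)^r + (1−p)^{2r−s} )^{n−2r+s}. -/

import Mathlib

open MeasureTheory Filter
open scoped Classical

/-- The Bernoulli measure on `Bool` with success probability `p` (clamped to `[0,1]`). -/
noncomputable def bernoulliMeasure (p : ℝ) : Measure Bool :=
  (PMF.bernoulli (min (Real.toNNReal p) 1) (min_le_right _ _)).toMeasure

instance (p : ℝ) : IsProbabilityMeasure (bernoulliMeasure p) :=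
  PMF.toMeasure.isProbabilityMeasure _

/-- The Erdős–Rényi measure `G(n,p)`: every potential edge (pair of vertices of `Fin n`)
is present independently with probability `p`.  A sample point is an indicator function
on `Sym2 (Fin n)` (diagonal coordinates are simply ignored). -/
noncomputable def gnp (n : ℕ) (p : ℝ) : Measure (Sym2 (Fin n) → Bool) :=
  Measure.pi fun _ => bernoulliMeasure p

/-- The simple graph determined by an edge-indicator function. -/
def graphOf {n : ℕ} (f : Sym2 (Fin n) → Bool) : SimpleGraph (Fin n) where
  Adj v w := v ≠ w ∧ f s(v, w) = true
  symm := by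
    refine ⟨fun v w h => ?_⟩
    exact ⟨Ne.symm h.1, by rw [Sym2.eq_swap]; exact h.2⟩
  loopless := ⟨fun v h => h.1 rfl⟩

/-- A set `S` of vertices is dominating if every vertex is in `S` or adjacent to a member
of `S`. -/
def IsDominating {n : ℕ} (G : SimpleGraph (Fin n)) (S : Set (Fin n)) : Prop :=
  ∀ v, v ∈ S ∨ ∃ u ∈ S, G.Adj u v

/-- The domination number: the smallest cardinality of a dominating set. -/
noncomputable def domNumber {n : ℕ} (G : SimpleGraph (Fin n)) : ℕ :=
  sInf {r | ∃ S : Finset (Fin n), S.card = r ∧ IsDominating G ↑S}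

/-- The number of dominating sets of size `r`. -/
noncomputable def numDomSets {n : ℕ} (G : SimpleGraph (Fin n)) (r : ℕ) : ℕ :=
  ((Finset.powersetCard r (Finset.univ : Finset (Fin n))).filter
    (fun S => IsDominating G ↑S)).card

/-- The expected number of dominating sets of size `r` in `G(n,p)`:
`E(X_r) = C(n,r) (1-(1-p)^r)^(n-r)`. -/
noncomputable def EX (n r : ℕ) (p : ℝ) : ℝ :=
  (n.choose r : ℝ) * (1 - (1 - p) ^ r) ^ (n - r)

/-- The critical size `r̂ = min{ r | E(X_r) ≥ 1/d } - 1`, where `d = np`. -/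
noncomputable def rhat (n : ℕ) (p : ℝ) : ℕ :=
  sInf {r : ℕ | EX n r p ≥ 1 / (n * p)} - 1


section Aux

variable {ι : Type*} [Fintype ι]

lemma meas_all (s : Set (ι → Bool)) : MeasurableSet s :=
  s.to_countable.measurableSet

/-- Independence of events depending on disjoint coordinate sets in a finite product of
Bernoulli-type measures on `Bool`. -/
lemma pi_indep_of_disjoint (μ : ι → Measure Bool) [∀ i, IsProbabilityMeasure (μ i)]
    (S : Set ι) (P Q : Set (ι → Bool))
    (hP : ∀ f g : ι → Bool, (∀ i ∈ S, f i = g i) → f ∈ P → g ∈ P)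
    (hQ : ∀ f g : ι → Bool, (∀ i ∉ S, f i = g i) → f ∈ Q → g ∈ Q) :
    Measure.pi μ (P ∩ Q) = Measure.pi μ P * Measure.pi μ Q := by
  classical
  set e := MeasurableEquiv.piEquivPiSubtypeProd (fun _ : ι => Bool) (· ∈ S) with he
  have mp := measurePreserving_piEquivPiSubtypeProd μ (· ∈ S)
  set P₁ : Set ({ i // i ∈ S } → Bool) := {h | ∃ f ∈ P, ∀ i : { i // i ∈ S }, f i = h i} with hP₁
  set Q₂ : Set ({ i // i ∉ S } → Bool) := {h | ∃ f ∈ Q, ∀ i : { i // i ∉ S }, f i = h i} with hQ₂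
  have hPe : P = e ⁻¹' (P₁ ×ˢ (Set.univ : Set ({ i // i ∉ S } → Bool))) := by
    ext f
    constructor
    · intro hf
      exact ⟨⟨f, hf, fun i => rfl⟩, trivial⟩
    · rintro ⟨⟨g, hg, hgf⟩, -⟩
      exact hP g f (fun i hi => hgf ⟨i, hi⟩) hg
  have hQe : Q = e ⁻¹' ((Set.univ : Set ({ i // i ∈ S } → Bool)) ×ˢ Q₂) := by
    ext f
    constructor
    · intro hf
      exact ⟨trivial, ⟨f, hf, fun i => rfl⟩⟩
    · rintro ⟨-, ⟨g, hg, hgf⟩⟩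
      exact hQ g f (fun i hi => hgf ⟨i, hi⟩) hg
  have hPQ : P ∩ Q = e ⁻¹' (P₁ ×ˢ Q₂) := by
    rw [hPe, hQe, ← Set.preimage_inter, Set.prod_inter_prod, Set.univ_inter, Set.inter_univ]
  have hm1 : MeasurableSet P₁ := P₁.to_countable.measurableSet
  have hm2 : MeasurableSet Q₂ := Q₂.to_countable.measurableSet
  have key : ∀ s : Set (({ i // i ∈ S } → Bool) × ({ i // i ∉ S } → Bool)), MeasurableSet s →
      Measure.pi μ (e ⁻¹' s) =
        ((Measure.pi fun i : { i // i ∈ S } => μ i).prod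
          (Measure.pi fun i : { i // i ∉ S } => μ i)) s := by
    intro s hs
    rw [← mp.map_eq, Measure.map_apply e.measurable hs]
  rw [hPQ, hPe, hQe, key _ (hm1.prod hm2), key _ (hm1.prod MeasurableSet.univ),
    key _ (MeasurableSet.univ.prod hm2), Measure.prod_prod, Measure.prod_prod,
    Measure.prod_prod, measure_univ, measure_univ, mul_one, one_mul]

lemma pi_iInter_prod {V : Type*} (μ : ι → Measure Bool) [∀ i, IsProbabilityMeasure (μ i)]
    (C : Finset V) (E : V → Set (ι → Bool)) (S : V → Finset ι)
    (hdep : ∀ v, ∀ f g : ι → Bool, (∀ i ∈ S v, f i = g i) → f ∈ E v → g ∈ E v)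
    (hdisj : ∀ v ∈ C, ∀ w ∈ C, v ≠ w → Disjoint (S v) (S w)) :
    Measure.pi μ (⋂ v ∈ C, E v) = ∏ v ∈ C, Measure.pi μ (E v) := by
  classical
  induction C using Finset.induction_on with
  | empty => simp
  | @insert w C hw ih =>
    rw [Finset.set_biInter_insert, Finset.prod_insert hw]
    rw [pi_indep_of_disjoint μ (↑(S w)) (E w) (⋂ v ∈ C, E v)
      (fun f g h hf => hdep w f g (fun i hi => h i hi) hf) ?_]
    · rw [ih (fun v hv w' hw' => hdisj v (Finset.mem_insert_of_mem hv) w'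
        (Finset.mem_insert_of_mem hw'))]
    · intro f g h hf
      simp only [Set.mem_iInter] at hf ⊢
      intro v hv
      refine hdep v f g (fun i hi => ?_) (hf v hv)
      have hvw : v ≠ w := fun hvw => hw (hvw ▸ hv)
      have : i ∉ (↑(S w) : Set ι) := by
        have hd := hdisj v (Finset.mem_insert_of_mem hv) w (Finset.mem_insert_self w C) hvw
        exact fun hiw => (Finset.disjoint_left.mp hd hi) hiw
      exact h i this

lemma pi_box (μ : Measure Bool) [IsProbabilityMeasure μ] (T : Finset ι) :
    Measure.pi (fun _ : ι => μ) {f | ∀ i ∈ T, f i = false} = μ {false} ^ T.card := by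
  classical
  have hset : {f : ι → Bool | ∀ i ∈ T, f i = false} =
      Set.pi Set.univ (fun i => if i ∈ T then {false} else Set.univ) := by
    ext f
    simp only [Set.mem_setOf_eq, Set.mem_pi, Set.mem_univ, forall_true_left]
    constructor
    · intro h i
      by_cases hi : i ∈ T <;> simp [hi, h]
    · intro h i hi
      have := h i
      simp [hi] at this
      exact this
  rw [hset, Measure.pi_pi]
  have : ∀ i : ι, μ (if i ∈ T then {false} else Set.univ) =
      if i ∈ T then μ {false} else 1 := by
    intro i; split_ifs with hi
    · rfl
    · exact measure_univ
  simp_rw [this]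
  rw [Finset.prod_ite_mem, Finset.univ_inter, Finset.prod_const]

lemma bernoulli_false {p : ℝ} (hp0 : 0 ≤ p) (hp1 : p ≤ 1) :
    bernoulliMeasure p {false} = ENNReal.ofReal (1 - p) := by
  have hmin : min (Real.toNNReal p) 1 = Real.toNNReal p := by
    rw [min_eq_left]
    exact (Real.toNNReal_le_one).mpr hp1
  rw [bernoulliMeasure, PMF.toMeasure_apply_singleton _ _ (measurableSet_singleton _),
    PMF.bernoulli_apply, Bool.cond_false, hmin, ENNReal.coe_sub, ENNReal.coe_one, ENNReal.ofReal_sub _ hp0, ENNReal.ofReal_one]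
  rfl

end Aux


/-- for sets `A, B` of size `r` with `|A ∩ B| = s` and `2r - s ≤ n`,
the probability that both `A` and `B` dominate `G(n,p)` is at most
`(1 - 2(1-p)^r + (1-p)^{2r-s})^{n-2r+s}`. -/
theorem stmt_15 (n r s : ℕ) (hn : 1 ≤ n) (p : ℝ) (hp0 : 0 ≤ p) (hp1 : p ≤ 1)
    (A B : Finset (Fin n)) (hA : A.card = r) (hB : B.card = r)
    (hAB : (A ∩ B).card = s) (hrs : 2 * r ≤ n + s) :
    gnp n p {f | IsDominating (graphOf f) ↑A ∧ IsDominating (graphOf f) ↑B} ≤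
      ENNReal.ofReal
        ((1 - 2 * (1 - p) ^ r + (1 - p) ^ (2 * r - s)) ^ (n + s - 2 * r)) := by
  classical
  have hq0 : (0:ℝ) ≤ 1 - p := by linarith
  have hq1 : (1:ℝ) - p ≤ 1 := by linarith
  set x : ℝ := 1 - 2 * (1 - p) ^ r + (1 - p) ^ (2 * r - s) with hx
  have hsr : s ≤ r := by
    rw [← hAB, ← hA]; exact Finset.card_le_card Finset.inter_subset_left
  have hUcard : (A ∪ B).card = 2 * r - s := by
    have h := Finset.card_union_add_card_inter A B
    rw [hA, hB, hAB] at h; omega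
  have hCcard0 : (A ∪ B)ᶜ.card = n + s - 2 * r := by
    have h := Finset.card_compl (A ∪ B)
    rw [Fintype.card_fin, hUcard] at h
    omega
  set C : Finset (Fin n) := (A ∪ B)ᶜ with hC
  have hCcard : C.card = n + s - 2 * r := hCcard0
  -- nonnegativity of x
  have ht1 : (1 - p) ^ r ≤ 1 := pow_le_one₀ hq0 hq1
  have ht0 : (0:ℝ) ≤ (1 - p) ^ r := pow_nonneg hq0 r
  have ht2 : ((1 - p) ^ r) ^ 2 ≤ (1 - p) ^ (2 * r - s) := by
    have h1 : ((1 - p) ^ r) ^ 2 = (1 - p) ^ (2 * r) := by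
      rw [← pow_mul]; ring_nf
    rw [h1]
    exact pow_le_pow_of_le_one hq0 hq1 (by omega)
  have hx0 : 0 ≤ x := by nlinarith [sq_nonneg (1 - (1 - p) ^ r)]
  -- the per-vertex events
  set E : Fin n → Set (Sym2 (Fin n) → Bool) :=
    fun v => {f | (∃ u ∈ A, f s(u, v) = true) ∧ (∃ u ∈ B, f s(u, v) = true)} with hE
  set S : Fin n → Finset (Sym2 (Fin n)) :=
    (fun v => (A ∪ B).image (fun u => s(u, v))) with hS
  have hsub : {f | IsDominating (graphOf f) ↑A ∧ IsDominating (graphOf f) ↑B} ⊆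
      ⋂ v ∈ C, E v := by
    rintro f ⟨hfA, hfB⟩
    simp only [Set.mem_iInter]
    intro v hv
    have hvAB : v ∉ A ∪ B := Finset.mem_compl.mp hv
    have hvA : v ∉ A := fun h => hvAB (Finset.mem_union_left _ h)
    have hvB : v ∉ B := fun h => hvAB (Finset.mem_union_right _ h)
    constructor
    · rcases hfA v with h | ⟨u, hu, hadj⟩
      · exact absurd (Finset.mem_coe.mp h) hvA
      · exact ⟨u, Finset.mem_coe.mp hu, hadj.2⟩
    · rcases hfB v with h | ⟨u, hu, hadj⟩
      · exact absurd (Finset.mem_coe.mp h) hvB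
      · exact ⟨u, Finset.mem_coe.mp hu, hadj.2⟩
  have hdep : ∀ v, ∀ f g : Sym2 (Fin n) → Bool,
      (∀ i ∈ S v, f i = g i) → f ∈ E v → g ∈ E v := by
    rintro v f g h ⟨⟨u, hu, hfu⟩, ⟨w, hw, hfw⟩⟩
    refine ⟨⟨u, hu, ?_⟩, ⟨w, hw, ?_⟩⟩
    · rw [← h _ (Finset.mem_image_of_mem _ (Finset.mem_union_left _ hu))]; exact hfu
    · rw [← h _ (Finset.mem_image_of_mem _ (Finset.mem_union_right _ hw))]; exact hfw
  have hdisj : ∀ v ∈ C, ∀ w ∈ C, v ≠ w → Disjoint (S v) (S w) := by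
    intro v hv w hw hvw
    rw [Finset.disjoint_left]
    rintro i hi hi'
    simp only [hS, Finset.mem_image] at hi hi'
    obtain ⟨u, hu, rfl⟩ := hi
    obtain ⟨u', hu', he⟩ := hi'
    rw [Sym2.eq_iff] at he
    rcases he with ⟨-, hwv⟩ | ⟨hu'v, hwu⟩
    · exact hvw hwv.symm
    · exact Finset.mem_compl.mp hw (hwu ▸ hu)
  have hgnp : gnp n p = Measure.pi (fun _ : Sym2 (Fin n) => bernoulliMeasure p) := rfl
  -- measure of each per-vertex event
  have hEv : ∀ v ∈ C, Measure.pi (fun _ : Sym2 (Fin n) => bernoulliMeasure p) (E v) =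
      ENNReal.ofReal x := by
    intro v hv
    have hvAB : v ∉ A ∪ B := Finset.mem_compl.mp hv
    have hinj : ∀ D : Finset (Fin n), v ∉ D →
        (D.image (fun u => s(u, v))).card = D.card := by
      intro D hvD
      apply Finset.card_image_of_injOn
      intro u hu u' hu' he
      rw [Sym2.eq_iff] at he
      rcases he with ⟨h1, -⟩ | ⟨h1, h2⟩
      · exact h1
      · exact absurd (h1 ▸ hu) hvD
    have hvA : v ∉ A := fun h => hvAB (Finset.mem_union_left _ h)
    have hvB : v ∉ B := fun h => hvAB (Finset.mem_union_right _ h)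
    set TA : Finset (Sym2 (Fin n)) := A.image (fun u => s(u, v)) with hTA
    set TB : Finset (Sym2 (Fin n)) := B.image (fun u => s(u, v)) with hTB
    set NA : Set (Sym2 (Fin n) → Bool) := {f | ∀ i ∈ TA, f i = false} with hNA
    set NB : Set (Sym2 (Fin n) → Bool) := {f | ∀ i ∈ TB, f i = false} with hNB
    set μ := Measure.pi (fun _ : Sym2 (Fin n) => bernoulliMeasure p) with hμ
    have hbool : ∀ b : Bool, ¬ b = true → b = false := by decide
    have hcompl : (E v)ᶜ = NA ∪ NB := by
      ext f
      simp only [hE, hNA, hNB, Set.mem_compl_iff, Set.mem_setOf_eq, Set.mem_union,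
        not_and_or]
      constructor
      · rintro (h | h)
        · left
          intro i hi
          rw [hTA, Finset.mem_image] at hi
          obtain ⟨u, hu, rfl⟩ := hi
          exact hbool _ (fun hc => h ⟨u, hu, hc⟩)
        · right
          intro i hi
          rw [hTB, Finset.mem_image] at hi
          obtain ⟨u, hu, rfl⟩ := hi
          exact hbool _ (fun hc => h ⟨u, hu, hc⟩)
      · rintro (h | h)
        · left
          rintro ⟨u, hu, hc⟩
          rw [h _ (by rw [hTA]; exact Finset.mem_image_of_mem _ hu)] at hc
          exact absurd hc (by decide)
        · right
          rintro ⟨u, hu, hc⟩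
          rw [h _ (by rw [hTB]; exact Finset.mem_image_of_mem _ hu)] at hc
          exact absurd hc (by decide)
    have hNANB : NA ∩ NB = {f : Sym2 (Fin n) → Bool | ∀ i ∈ TA ∪ TB, f i = false} := by
      ext f
      simp only [hNA, hNB, Set.mem_inter_iff, Set.mem_setOf_eq, Finset.mem_union]
      constructor
      · rintro ⟨h1, h2⟩ i (hi | hi)
        · exact h1 i hi
        · exact h2 i hi
      · intro h
        exact ⟨fun i hi => h i (Or.inl hi), fun i hi => h i (Or.inr hi)⟩
    have hbf := bernoulli_false hp0 hp1
    have hμNA : μ NA = ENNReal.ofReal ((1 - p) ^ r) := by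
      rw [hNA, pi_box, hbf, hTA, hinj A hvA, hA, ENNReal.ofReal_pow hq0]
    have hμNB : μ NB = ENNReal.ofReal ((1 - p) ^ r) := by
      rw [hNB, pi_box, hbf, hTB, hinj B hvB, hB, ENNReal.ofReal_pow hq0]
    have hTATB : TA ∪ TB = (A ∪ B).image (fun u => s(u, v)) := by
      rw [hTA, hTB, Finset.image_union]
    have hμNANB : μ (NA ∩ NB) = ENNReal.ofReal ((1 - p) ^ (2 * r - s)) := by
      rw [hNANB, pi_box, hbf, hTATB, hinj (A ∪ B) hvAB, hUcard, ENNReal.ofReal_pow hq0]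
    have h1 : μ (E v) + μ ((E v)ᶜ) = 1 := by
      rw [measure_add_measure_compl (meas_all _)]
      exact measure_univ
    have h2 : μ (NA ∪ NB) + μ (NA ∩ NB) = μ NA + μ NB :=
      measure_union_add_inter _ (meas_all _)
    have key : μ (E v) + (μ NA + μ NB) = 1 + μ (NA ∩ NB) := by
      rw [hcompl] at h1
      rw [← h2, ← add_assoc, h1]
    have key2 : ENNReal.ofReal x + (μ NA + μ NB) = 1 + μ (NA ∩ NB) := by
      rw [hμNA, hμNB, hμNANB, ← ENNReal.ofReal_add ht0 ht0,
        ← ENNReal.ofReal_add hx0 (by linarith), ← ENNReal.ofReal_one,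
        ← ENNReal.ofReal_add (by norm_num) (pow_nonneg hq0 _)]
      congr 1
      rw [hx]; ring
    have hne : μ NA + μ NB ≠ ⊤ := by
      rw [hμNA, hμNB]
      exact ENNReal.add_ne_top.mpr ⟨ENNReal.ofReal_ne_top, ENNReal.ofReal_ne_top⟩
    exact WithTop.add_right_cancel hne (key.trans key2.symm)
  calc gnp n p {f | IsDominating (graphOf f) ↑A ∧ IsDominating (graphOf f) ↑B}
      ≤ gnp n p (⋂ v ∈ C, E v) := measure_mono hsub
    _ = ∏ v ∈ C, Measure.pi (fun _ : Sym2 (Fin n) => bernoulliMeasure p) (E v) := by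
        rw [hgnp]; exact pi_iInter_prod _ C E S hdep hdisj
    _ = ∏ v ∈ C, ENNReal.ofReal x := Finset.prod_congr rfl hEv
    _ = ENNReal.ofReal x ^ C.card := Finset.prod_const _
    _ = ENNReal.ofReal (x ^ (n + s - 2 * r)) := by
        rw [hCcard, ENNReal.ofReal_pow hx0]
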